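/- Define for an increasing tuple $u = (u_0,\dots,u_{n-1})$ of nonnegative integers the lower jumps $l_i = u_0 + (u_1-u_0)p + \cdots + (u_i - u_{i-1})p^i$ and the function $v_d(u) = \sum \lceil (i_0 p^{n-1} l_0 + i_1 p^{n-2} l_1 + \cdots + i_{n-1} l_{n-1})/p^n \rceil$, summing over tuples $(i_0,\dots,i_{n-1}) \in \{0,\dots,p-1\}^n$ with $\sum_j i_j p^j < d$. Then for all nonnegative integers $q_0,\dots,q_{n-1}$ and $r_0,\dots,r_{n-1}$, $v_d(q_0 p^n + r_0, \dots, q_{n-1}p^n + r_{n-1}) = \sum_{m=0}^{n-1} D_d^{(m)} q_m + v_d(r_0,\dots,r_{n-1})$, where $D_d^{(m)} = p^{n-1}(S_d^{(m)} - (p-1)\sum_{l=m+1}^{n-1} p^{m-l}S_d^{(l)})$ with $S_d^{(l)}$ the sum of $(l+1)$-th base-$p$ digits of $0,\dots,d-1$. -/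

import Mathlib

/-- Sum of the `(m+1)`-th base-`p` digits of `0, 1, ..., d-1`. -/
def digitSum (p d m : ℕ) : ℕ := ∑ i ∈ Finset.range d, i / p ^ m % p

/-- The invariant `D_d^{(m)} = p^{n-1}(S_d^{(m)} - (p-1) ∑_{l=m+1}^{n-1} p^{m-l} S_d^{(l)})`. -/
def Dinv (p n d m : ℕ) : ℚ :=
  (p : ℚ) ^ (n - 1) * ((digitSum p d m : ℚ) -
    ((p : ℚ) - 1) * ∑ l ∈ Finset.Icc (m + 1) (n - 1),
      (p : ℚ) ^ ((m : ℤ) - (l : ℤ)) * (digitSum p d l : ℚ))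

/-- Lower ramification jumps from upper jumps: `l_i = u_0 + ∑_{j=1}^i (u_j - u_{j-1}) p^j`. -/
def lowerJump (p : ℕ) (u : ℕ → ℤ) (i : ℕ) : ℤ :=
  u 0 + ∑ j ∈ Finset.Icc 1 i, (u j - u (j - 1)) * (p : ℤ) ^ j

/-- The v-function associated to an indecomposable representation of dimension `d`,
as a function of the tuple of (upper) ramification jumps. -/
def vFunc (p n d : ℕ) (u : ℕ → ℤ) : ℤ :=
  ∑ i ∈ Finset.univ.filter
      (fun i : Fin n → Fin p => ∑ j : Fin n, (i j : ℕ) * p ^ (j : ℕ) < d),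
    ⌈(∑ m : Fin n, (i m : ℚ) * (p : ℚ) ^ (n - 1 - (m : ℕ)) *
        (lowerJump p u (m : ℕ) : ℚ)) / (p : ℚ) ^ n⌉

lemma lowerJump_linear (p n : ℕ) (q r : ℕ → ℕ) (i : ℕ) :
    lowerJump p (fun j => (q j : ℤ) * (p : ℤ) ^ n + (r j : ℤ)) i
      = (p : ℤ) ^ n * lowerJump p (fun j => (q j : ℤ)) i
        + lowerJump p (fun j => (r j : ℤ)) i := by
  unfold lowerJump
  have h : ∀ j ∈ Finset.Icc 1 i,
      (((q j : ℤ) * (p:ℤ)^n + (r j : ℤ)) - ((q (j-1) : ℤ) * (p:ℤ)^n + (r (j-1) : ℤ))) * (p:ℤ)^j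
        = (p:ℤ)^n * (((q j : ℤ) - (q (j-1) : ℤ)) * (p:ℤ)^j)
          + ((r j : ℤ) - (r (j-1) : ℤ)) * (p:ℤ)^j := fun j _ => by ring
  rw [Finset.sum_congr rfl h, Finset.sum_add_distrib, ← Finset.mul_sum]
  ring


lemma lowerJump_eq (p : ℕ) (q : ℕ → ℤ) (m : ℕ) :
    lowerJump p q m = ∑ j ∈ Finset.range (m + 1),
      q j * (if j = m then (p : ℤ) ^ j else (p : ℤ) ^ j - (p : ℤ) ^ (j + 1)) := by
  induction m with
  | zero => simp [lowerJump]
  | succ m ih =>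
    have h1 : lowerJump p q (m + 1)
        = lowerJump p q m + (q (m+1) - q m) * (p:ℤ)^(m+1) := by
      unfold lowerJump
      rw [Finset.sum_Icc_succ_top (Nat.le_add_left 1 m)]
      simp only [Nat.add_sub_cancel]
      ring
    rw [h1, ih, Finset.sum_range_succ, Finset.sum_range_succ,
      Finset.sum_range_succ (n := m)]
    have hcong : ∀ j ∈ Finset.range m,
        q j * (if j = m then (p : ℤ) ^ j else (p : ℤ) ^ j - (p : ℤ) ^ (j + 1))
          = q j * (if j = m + 1 then (p : ℤ) ^ j else (p : ℤ) ^ j - (p : ℤ) ^ (j + 1)) := by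
      intro j hj
      have := Finset.mem_range.mp hj
      rw [if_neg (by omega), if_neg (by omega)]
    rw [Finset.sum_congr rfl hcong]
    rw [if_pos rfl, if_pos rfl, if_neg (by omega : ¬ m = m + 1)]
    ring

lemma sum_filter_digit (p n d : ℕ) (hd2 : d ≤ p ^ n) (m : Fin n) :
    ∑ i ∈ Finset.univ.filter
        (fun i : Fin n → Fin p => ∑ j : Fin n, (i j : ℕ) * p ^ (j : ℕ) < d),
      ((i m : ℕ)) = digitSum p d (m : ℕ) := by
  have h1 : ∑ i ∈ Finset.univ.filter
        (fun i : Fin n → Fin p => ∑ j : Fin n, (i j : ℕ) * p ^ (j : ℕ) < d),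
      ((i m : ℕ))
      = ∑ a ∈ Finset.univ.filter (fun a : Fin (p ^ n) => (a : ℕ) < d),
          ((a : ℕ) / p ^ (m : ℕ) % p) := by
    refine Finset.sum_equiv finFunctionFinEquiv (fun i => ?_) (fun i hi => ?_)
    · simp only [Finset.mem_filter, Finset.mem_univ, true_and,
        finFunctionFinEquiv_apply]
    · have h : (finFunctionFinEquiv.symm (finFunctionFinEquiv i)) m = i m := by
        rw [Equiv.symm_apply_apply]
      rw [← h]
      rfl
  have h2 : ∑ a ∈ Finset.univ.filter (fun a : Fin (p ^ n) => (a : ℕ) < d),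
          ((a : ℕ) / p ^ (m : ℕ) % p)
      = ∑ k ∈ Finset.range d, k / p ^ (m : ℕ) % p := by
    refine Finset.sum_bij' (fun a _ => (a : ℕ)) (fun k hk => (⟨k, ?_⟩ : Fin (p ^ n)))
      ?_ ?_ ?_ ?_ ?_
    · exact lt_of_lt_of_le (Finset.mem_range.mp hk) hd2
    · intro a ha
      simp only [Finset.mem_filter, Finset.mem_univ, true_and] at ha
      exact Finset.mem_range.mpr ha
    · intro k hk
      simp only [Finset.mem_filter, Finset.mem_univ, true_and]
      exact Finset.mem_range.mp hk
    · intro a ha; rfl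
    · intro k hk; rfl
    · intro a ha; rfl
  rw [h1, h2, digitSum]

lemma algebra_lemma (p n d : ℕ) (hp : 0 < p) (hn : 1 ≤ n) (q : ℕ → ℤ) :
    ∑ m ∈ Finset.range n,
        (digitSum p d m : ℚ) * ((p:ℚ) ^ (n - 1 - m) * (lowerJump p q m : ℚ))
      = ∑ j ∈ Finset.range n, Dinv p n d j * (q j : ℚ) := by
  have hp0 : (p : ℚ) ≠ 0 := Nat.cast_ne_zero.mpr hp.ne'
  set S : ℕ → ℚ := fun m => (digitSum p d m : ℚ) with hS
  -- expand lowerJump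
  have expand : ∀ m ∈ Finset.range n,
      S m * ((p:ℚ) ^ (n - 1 - m) * (lowerJump p q m : ℚ))
        = ∑ j ∈ Finset.range (m + 1),
            (p:ℚ) ^ (n - 1 - m) * S m
              * (if j = m then (p:ℚ) ^ j else (p:ℚ) ^ j - (p:ℚ) ^ (j+1)) * (q j : ℚ) := by
    intro m _
    rw [lowerJump_eq]
    push_cast [apply_ite (fun z : ℤ => (z : ℚ))]
    rw [Finset.mul_sum, Finset.mul_sum]
    refine Finset.sum_congr rfl fun j hj => ?_
    split_ifs <;> ring
  rw [Finset.sum_congr rfl expand]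
  -- swap sums
  have swap : ∑ m ∈ Finset.range n, ∑ j ∈ Finset.range (m + 1),
      (p:ℚ) ^ (n - 1 - m) * S m
        * (if j = m then (p:ℚ) ^ j else (p:ℚ) ^ j - (p:ℚ) ^ (j+1)) * (q j : ℚ)
      = ∑ j ∈ Finset.range n, ∑ m ∈ Finset.Icc j (n - 1),
          (p:ℚ) ^ (n - 1 - m) * S m
            * (if j = m then (p:ℚ) ^ j else (p:ℚ) ^ j - (p:ℚ) ^ (j+1)) * (q j : ℚ) := by
    have h1 : ∀ m ∈ Finset.range n, ∑ j ∈ Finset.range (m + 1),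
        (p:ℚ) ^ (n - 1 - m) * S m
          * (if j = m then (p:ℚ) ^ j else (p:ℚ) ^ j - (p:ℚ) ^ (j+1)) * (q j : ℚ)
        = ∑ j ∈ Finset.range n, if j ≤ m then
            (p:ℚ) ^ (n - 1 - m) * S m
              * (if j = m then (p:ℚ) ^ j else (p:ℚ) ^ j - (p:ℚ) ^ (j+1)) * (q j : ℚ) else 0 := by
      intro m hm
      have hmn := Finset.mem_range.mp hm
      rw [← Finset.sum_filter]
      congr 1
      ext j
      simp only [Finset.mem_filter, Finset.mem_range]
      omega
    rw [Finset.sum_congr rfl h1, Finset.sum_comm]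
    refine Finset.sum_congr rfl fun j hj => ?_
    rw [← Finset.sum_filter]
    congr 1
    ext m
    simp only [Finset.mem_filter, Finset.mem_range, Finset.mem_Icc]
    omega
  rw [swap]
  refine Finset.sum_congr rfl fun j hj => ?_
  have hjn := Finset.mem_range.mp hj
  have hj1 : j ≤ n - 1 := by omega
  -- key exponent identity
  have key : ∀ m, m ≤ n - 1 → (p:ℚ) ^ (n - 1 - m) * (p:ℚ) ^ j
      = (p:ℚ) ^ (n - 1) * (p:ℚ) ^ ((j:ℤ) - (m:ℤ)) := by
    intro m hm
    rw [← zpow_natCast (p:ℚ) (n - 1 - m), ← zpow_natCast (p:ℚ) j,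
      ← zpow_natCast (p:ℚ) (n - 1), ← zpow_add₀ hp0, ← zpow_add₀ hp0]
    congr 1
    omega
  have hsplit : Finset.Icc j (n-1) = insert j (Finset.Icc (j+1) (n-1)) := by
    ext m
    simp only [Finset.mem_Icc, Finset.mem_insert]
    omega
  rw [hsplit, Finset.sum_insert (by simp)]
  rw [if_pos rfl]
  have h2 : ∑ m ∈ Finset.Icc (j+1) (n-1),
      (p:ℚ) ^ (n - 1 - m) * S m
        * (if j = m then (p:ℚ) ^ j else (p:ℚ) ^ j - (p:ℚ) ^ (j+1)) * (q j : ℚ)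
      = ∑ m ∈ Finset.Icc (j+1) (n-1),
          -(((p:ℚ) - 1) * ((p:ℚ) ^ (n-1) * ((p:ℚ) ^ ((j:ℤ) - (m:ℤ)) * S m))) * (q j : ℚ) := by
    refine Finset.sum_congr rfl fun m hm => ?_
    have hm' := Finset.mem_Icc.mp hm
    rw [if_neg (by omega)]
    have k := key m hm'.2
    linear_combination ((1 - (p:ℚ)) * S m * (q j : ℚ)) * k
  rw [h2, ← Finset.sum_mul]
  have k0 := key j hj1
  rw [Dinv]
  have hsum : (∑ i ∈ Finset.Icc (j+1) (n-1),
        -(((p:ℚ)-1) * ((p:ℚ)^(n-1) * ((p:ℚ)^((j:ℤ)-(i:ℤ)) * S i))))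
      = -(((p:ℚ)-1) * ((p:ℚ)^(n-1)
          * ∑ l ∈ Finset.Icc (j+1) (n-1), (p:ℚ)^((j:ℤ)-(l:ℤ)) * S l)) := by
    rw [Finset.sum_neg_distrib, ← Finset.mul_sum, ← Finset.mul_sum]
  have h1 : (p:ℚ) ^ ((j:ℤ) - (j:ℤ)) = 1 := by simp
  simp only [hS]
  linear_combination (S j * (q j : ℚ)) * k0 + (S j * (q j : ℚ) * (p:ℚ)^(n-1)) * h1
    + (q j : ℚ) * hsum

theorem stmt18 (p n d : ℕ) (hp : p.Prime) (hn : 1 ≤ n) (hd1 : 1 ≤ d) (hd2 : d ≤ p ^ n)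
    (q r : ℕ → ℕ) :
    (vFunc p n d (fun j => (q j : ℤ) * (p : ℤ) ^ n + (r j : ℤ)) : ℚ) =
      (∑ m ∈ Finset.range n, Dinv p n d m * (q m : ℚ)) +
        (vFunc p n d (fun j => (r j : ℤ)) : ℚ) := by
  have hp0 : (p : ℚ) ≠ 0 := Nat.cast_ne_zero.mpr hp.pos.ne'
  have step1 : vFunc p n d (fun j => (q j : ℤ) * (p : ℤ) ^ n + (r j : ℤ))
      = (∑ i ∈ Finset.univ.filter
            (fun i : Fin n → Fin p => ∑ j : Fin n, (i j : ℕ) * p ^ (j : ℕ) < d),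
          ∑ m : Fin n, (i m : ℤ) * (p : ℤ) ^ (n - 1 - (m : ℕ))
            * lowerJump p (fun j => (q j : ℤ)) (m : ℕ))
        + vFunc p n d (fun j => (r j : ℤ)) := by
    rw [vFunc, vFunc, ← Finset.sum_add_distrib]
    refine Finset.sum_congr rfl fun i hi => ?_
    have harg : (∑ m : Fin n, (i m : ℚ) * (p : ℚ) ^ (n - 1 - (m : ℕ)) *
          (lowerJump p (fun j => (q j : ℤ) * (p : ℤ) ^ n + (r j : ℤ)) (m : ℕ) : ℚ)) / (p : ℚ) ^ n
        = (∑ m : Fin n, (i m : ℚ) * (p : ℚ) ^ (n - 1 - (m : ℕ)) *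
            (lowerJump p (fun j => (r j : ℤ)) (m : ℕ) : ℚ)) / (p : ℚ) ^ n
          + ((∑ m : Fin n, (i m : ℤ) * (p : ℤ) ^ (n - 1 - (m : ℕ))
              * lowerJump p (fun j => (q j : ℤ)) (m : ℕ) : ℤ) : ℚ) := by
      simp only [lowerJump_linear]
      push_cast
      have hterm : ∀ m : Fin n, (m : Fin n) ∈ Finset.univ →
          (i m : ℚ) * (p : ℚ) ^ (n - 1 - (m : ℕ)) *
            ((p:ℚ)^n * (lowerJump p (fun j => (q j : ℤ)) (m : ℕ) : ℚ)
              + (lowerJump p (fun j => (r j : ℤ)) (m : ℕ) : ℚ))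
          = (i m : ℚ) * (p : ℚ) ^ (n - 1 - (m : ℕ)) *
              (lowerJump p (fun j => (r j : ℤ)) (m : ℕ) : ℚ)
            + (p:ℚ)^n * ((i m : ℚ) * (p : ℚ) ^ (n - 1 - (m : ℕ))
              * (lowerJump p (fun j => (q j : ℤ)) (m : ℕ) : ℚ)) := fun m _ => by ring
      rw [Finset.sum_congr rfl hterm, Finset.sum_add_distrib, ← Finset.mul_sum]
      field_simp
    rw [harg, Int.ceil_add_intCast]
    ring
  rw [step1, Int.cast_add]
  congr 1
  push_cast
  rw [Finset.sum_comm]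
  have hrow : ∀ m : Fin n, (m : Fin n) ∈ Finset.univ →
      (∑ i ∈ Finset.univ.filter
          (fun i : Fin n → Fin p => ∑ j : Fin n, (i j : ℕ) * p ^ (j : ℕ) < d),
        (i m : ℚ) * (p : ℚ) ^ (n - 1 - (m : ℕ))
          * (lowerJump p (fun j => (q j : ℤ)) (m : ℕ) : ℚ))
      = (digitSum p d (m : ℕ) : ℚ) * ((p : ℚ) ^ (n - 1 - (m : ℕ))
          * (lowerJump p (fun j => (q j : ℤ)) (m : ℕ) : ℚ)) := by
    intro m _
    rw [← Finset.sum_mul, ← Finset.sum_mul]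
    rw [show (∑ i ∈ Finset.univ.filter
          (fun i : Fin n → Fin p => ∑ j : Fin n, (i j : ℕ) * p ^ (j : ℕ) < d),
        (i m : ℚ)) = ((digitSum p d (m : ℕ) : ℕ) : ℚ) by
      rw [← Nat.cast_sum, sum_filter_digit p n d hd2 m]]
    ring
  rw [Finset.sum_congr rfl hrow,
    Fin.sum_univ_eq_sum_range (fun m => (digitSum p d m : ℚ) * ((p : ℚ) ^ (n - 1 - m)
      * (lowerJump p (fun j => (q j : ℤ)) m : ℚ)))]
  exact algebra_lemma p n d hp.pos hn (fun j => (q j : ℤ))
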